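/- Let G be a graph, U a set of k vertices of G, and suppose e = (u,v) is an edge with u,v ∈ U such that e lies in every matching of size m in G[U]. Then at most 2m - 2 edges of G[U] other than e are incident to u or v. -/
import Mathlib


/-- If the edge `s(u,v)` of `G[U]` lies in some size-`m` matching of `G[U]` and in every
size-`m` matching of `G[U]`, then at most `2m - 2` edges of `G[U]` other than `s(u,v)`
are incident to `u` or `v`. -/
theorem stmt_7 {V : Type*} [Fintype V] [DecidableEq V] (G : SimpleGraph V)
    [DecidableRel G.Adj] (U : Finset V) (m : ℕ) (u v : V)
    (hu : u ∈ U) (hv : v ∈ U) (huv : G.Adj u v)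
    (hex : ∃ M : Finset (Sym2 V),
      M ⊆ G.edgeFinset.filter (fun e => ∀ x ∈ e, x ∈ U) ∧
      M.card = m ∧
      ((M : Set (Sym2 V)).Pairwise fun e₁ e₂ => ∀ x, x ∈ e₁ → x ∉ e₂) ∧
      s(u, v) ∈ M)
    (hall : ∀ M : Finset (Sym2 V),
      M ⊆ G.edgeFinset.filter (fun e => ∀ x ∈ e, x ∈ U) →
      M.card = m →
      ((M : Set (Sym2 V)).Pairwise fun e₁ e₂ => ∀ x, x ∈ e₁ → x ∉ e₂) →
      s(u, v) ∈ M) :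
    ((G.edgeFinset.filter (fun e => ∀ x ∈ e, x ∈ U)).filter
        (fun e => e ≠ s(u, v) ∧ (u ∈ e ∨ v ∈ e))).card ≤ 2 * m - 2 := by
  classical
  obtain ⟨M, hMsub, hMcard, hMpair, heM⟩ := hex
  set S := G.edgeFinset.filter (fun e => ∀ x ∈ e, x ∈ U) with hSdef
  set F := S.filter (fun e => e ≠ s(u, v) ∧ (u ∈ e ∨ v ∈ e)) with hFdef
  have hm1 : 1 ≤ m := hMcard ▸ Finset.card_pos.mpr ⟨_, heM⟩
  -- edges of M other than s(u,v) avoid both u and v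
  have hMe : ∀ g ∈ M, g ≠ s(u, v) → u ∉ g ∧ v ∉ g := by
    intro g hg hge
    have h := hMpair hg heM hge
    exact ⟨fun hx => h u hx (by simp), fun hx => h v hx (by simp)⟩
  -- every f ∈ F meets some g ∈ M.erase s(u,v)
  have hmeet : ∀ f ∈ F, ∃ g ∈ M.erase s(u, v), ∃ x, x ∈ f ∧ x ∈ g := by
    intro f hf
    by_contra hcon
    push_neg at hcon
    obtain ⟨hfS, hfne, hfuv⟩ := Finset.mem_filter.mp hf
    have hfM : f ∉ M := by
      intro hfM
      obtain ⟨h1, h2⟩ := hMe f hfM hfne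
      rcases hfuv with h | h
      · exact h1 h
      · exact h2 h
    have hfM' : f ∉ M.erase s(u, v) := fun h => hfM (Finset.mem_of_mem_erase h)
    have hcard : (insert f (M.erase s(u, v))).card = m := by
      rw [Finset.card_insert_of_notMem hfM', Finset.card_erase_of_mem heM, hMcard]
      omega
    have hsub : insert f (M.erase s(u, v)) ⊆ S := by
      intro x hx
      rcases Finset.mem_insert.mp hx with rfl | hx
      · exact hfS
      · exact hMsub (Finset.mem_of_mem_erase hx)
    have hpair : ((insert f (M.erase s(u, v)) : Finset (Sym2 V)) : Set (Sym2 V)).Pairwise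
        fun e₁ e₂ => ∀ x, x ∈ e₁ → x ∉ e₂ := by
      rw [Finset.coe_insert]
      refine Set.pairwise_insert.mpr ⟨hMpair.mono (Finset.coe_subset.mpr (Finset.erase_subset _ _)), ?_⟩
      intro g hg _
      have hg' : g ∈ M.erase s(u, v) := hg
      exact ⟨fun x hxf hxg => hcon g hg' x hxf hxg,
             fun x hxg hxf => hcon g hg' x hxf hxg⟩
    have := hall _ hsub hcard hpair
    rcases Finset.mem_insert.mp this with h | h
    · exact hfne h.symm
    · exact (Finset.notMem_erase _ _) h
  -- the assignment of each f ∈ F to an edge of M.erase s(u,v) it meets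
  have hinh : Inhabited (Sym2 V) := ⟨s(u, v)⟩
  choose! ψ hψ1 hψ2 using hmeet
  have hψ : ∀ f ∈ F, ψ f ∈ M.erase s(u, v) ∧ ∃ x, x ∈ f ∧ x ∈ ψ f :=
    fun f hf => ⟨hψ1 f hf, hψ2 f hf⟩
  -- the swap lemma: can't have both s(u,a) and s(v,b) in F for s(a,b) ∈ M.erase s(u,v)
  have hswap : ∀ a b : V, s(a, b) ∈ M.erase s(u, v) → s(u, a) ∈ F → s(v, b) ∈ F → False := by
    intro a b hg hua hvb
    have hgM : s(a, b) ∈ M := Finset.mem_of_mem_erase hg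
    have hgne : s(a, b) ≠ s(u, v) := Finset.ne_of_mem_erase hg
    obtain ⟨hug, hvg⟩ := hMe _ hgM hgne
    have hau : a ≠ u := fun h => hug (by simp [h])
    have hav : a ≠ v := fun h => hvg (by simp [h])
    have hbu : b ≠ u := fun h => hug (by simp [h])
    have hbv : b ≠ v := fun h => hvg (by simp [h])
    have hab : a ≠ b := by
      have : s(a, b) ∈ G.edgeFinset := (Finset.mem_filter.mp (hMsub hgM)).1
      exact (SimpleGraph.mem_edgeFinset.mp this).ne
    have huv' : u ≠ v := huv.ne
    obtain ⟨huaS, huane, -⟩ := Finset.mem_filter.mp hua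
    obtain ⟨hvbS, hvbne, -⟩ := Finset.mem_filter.mp hvb
    -- s(u,a) and s(v,b) are not in M
    have huaM : s(u, a) ∉ M := by
      intro h
      exact (hMe _ h huane).1 (by simp)
    have hvbM : s(v, b) ∉ M := by
      intro h
      exact (hMe _ h hvbne).2 (by simp)
    have hne1 : s(u, a) ≠ s(v, b) := by
      intro h
      rw [Sym2.eq_iff] at h
      rcases h with ⟨h1, -⟩ | ⟨h1, -⟩
      · exact huv' h1
      · exact hbu h1.symm
    set M2 := insert s(u, a) (insert s(v, b) ((M.erase s(u, v)).erase s(a, b))) with hM2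
    have hrest : ∀ h' ∈ (M.erase s(u, v)).erase s(a, b), h' ∈ M ∧ h' ≠ s(u, v) ∧ h' ≠ s(a, b) :=
      fun h' hh => ⟨Finset.mem_of_mem_erase (Finset.mem_of_mem_erase hh),
        Finset.ne_of_mem_erase (Finset.mem_of_mem_erase hh), Finset.ne_of_mem_erase hh⟩
    have hvb2 : s(v, b) ∉ (M.erase s(u, v)).erase s(a, b) := by
      intro h
      exact hvbM (hrest _ h).1
    have hua2 : s(u, a) ∉ insert s(v, b) ((M.erase s(u, v)).erase s(a, b)) := by
      intro h
      rcases Finset.mem_insert.mp h with h | h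
      · exact hne1 h
      · exact huaM (hrest _ h).1
    have hm2 : 2 ≤ m := by
      rw [← hMcard]
      exact Finset.one_lt_card.mpr ⟨_, heM, _, hgM, Ne.symm hgne⟩
    have hcard2 : M2.card = m := by
      rw [hM2, Finset.card_insert_of_notMem hua2, Finset.card_insert_of_notMem hvb2,
        Finset.card_erase_of_mem (Finset.mem_erase.mpr ⟨hgne, hgM⟩),
        Finset.card_erase_of_mem heM, hMcard]
      omega
    have hsub2 : M2 ⊆ S := by
      intro x hx
      rcases Finset.mem_insert.mp hx with rfl | hx
      · exact huaS
      rcases Finset.mem_insert.mp hx with rfl | hx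
      · exact hvbS
      · exact hMsub (hrest _ hx).1
    -- disjointness helpers
    have hdua : ∀ h' ∈ (M.erase s(u, v)).erase s(a, b), ∀ x, x ∈ s(u, a) → x ∉ h' := by
      intro h' hh x hx hxh
      obtain ⟨hhM, hhne, hhg⟩ := hrest _ hh
      rcases Sym2.mem_iff.mp hx with rfl | rfl
      · exact (hMe _ hhM hhne).1 hxh
      · exact hMpair hgM hhM (Ne.symm hhg) x (by simp) hxh
    have hdvb : ∀ h' ∈ (M.erase s(u, v)).erase s(a, b), ∀ x, x ∈ s(v, b) → x ∉ h' := by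
      intro h' hh x hx hxh
      obtain ⟨hhM, hhne, hhg⟩ := hrest _ hh
      rcases Sym2.mem_iff.mp hx with rfl | rfl
      · exact (hMe _ hhM hhne).2 hxh
      · exact hMpair hgM hhM (Ne.symm hhg) x (by simp) hxh
    have hduavb : ∀ x, x ∈ s(u, a) → x ∉ s(v, b) := by
      intro x hx hx'
      rcases Sym2.mem_iff.mp hx with rfl | rfl <;>
        rcases Sym2.mem_iff.mp hx' with h | h
      · exact huv' h
      · exact hbu h.symm
      · exact hav h
      · exact hab h
    have hpair2 : ((M2 : Finset (Sym2 V)) : Set (Sym2 V)).Pairwise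
        fun e₁ e₂ => ∀ x, x ∈ e₁ → x ∉ e₂ := by
      rw [hM2, Finset.coe_insert, Finset.coe_insert]
      refine Set.pairwise_insert.mpr ⟨Set.pairwise_insert.mpr
        ⟨hMpair.mono ?_, ?_⟩, ?_⟩
      · refine Finset.coe_subset.mpr ?_
        exact (Finset.erase_subset _ _).trans (Finset.erase_subset _ _)
      · intro h' hh _
        have hh' : h' ∈ (M.erase s(u, v)).erase s(a, b) := hh
        exact ⟨fun x hx hx' => hdvb _ hh' x hx hx',
               fun x hx hx' => hdvb _ hh' x hx' hx⟩
      · intro h' hh _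
        rcases hh with rfl | hh
        · exact ⟨hduavb, fun x hx hx' => hduavb x hx' hx⟩
        · have hh' : h' ∈ (M.erase s(u, v)).erase s(a, b) := hh
          exact ⟨fun x hx hx' => hdua _ hh' x hx hx',
                 fun x hx hx' => hdua _ hh' x hx' hx⟩
    have := hall _ hsub2 hcard2 hpair2
    rcases Finset.mem_insert.mp this with h | h
    · exact huane h.symm
    rcases Finset.mem_insert.mp h with h | h
    · exact hvbne h.symm
    · exact (hrest _ h).2.1 rfl
  -- fiber bound
  have hfiber : ∀ g ∈ M.erase s(u, v), (F.filter (fun f => ψ f = g)).card ≤ 2 := by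
    intro g
    induction g using Sym2.ind with
    | _ a b =>
    intro hg
    have hgM : s(a, b) ∈ M := Finset.mem_of_mem_erase hg
    have hgne : s(a, b) ≠ s(u, v) := Finset.ne_of_mem_erase hg
    obtain ⟨hug, hvg⟩ := hMe _ hgM hgne
    have hsubP : F.filter (fun f => ψ f = s(a, b)) ⊆
        ({s(u, a), s(v, b)} : Finset (Sym2 V)) ∪ {s(u, b), s(v, a)} := by
      intro f hf
      obtain ⟨hfF, hψf⟩ := Finset.mem_filter.mp hf
      obtain ⟨-, x, hxf, hxψ⟩ := hψ f hfF
      rw [hψf] at hxψ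
      have hxu : x ≠ u := fun h => hug (h ▸ hxψ)
      have hxv : x ≠ v := fun h => hvg (h ▸ hxψ)
      obtain ⟨-, -, hfuv⟩ := Finset.mem_filter.mp hfF
      have hfeq : f = s(u, x) ∨ f = s(v, x) := by
        rcases hfuv with h | h
        · exact Or.inl ((Sym2.mem_and_mem_iff hxu.symm).mp ⟨h, hxf⟩)
        · exact Or.inr ((Sym2.mem_and_mem_iff hxv.symm).mp ⟨h, hxf⟩)
      rcases Sym2.mem_iff.mp hxψ with rfl | rfl <;>
        rcases hfeq with rfl | rfl <;>
          simp [Finset.mem_union, Finset.mem_insert]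
    have key : ∀ (P : Finset (Sym2 V)) (c d : V), P = {s(u, c), s(v, d)} →
        s(c, d) ∈ M.erase s(u, v) →
        ((F.filter (fun f => ψ f = s(a, b))) ∩ P).card ≤ 1 := by
      intro P c d hP hcd
      rw [Finset.card_le_one]
      intro p hp q hq
      obtain ⟨hpf, hpP⟩ := Finset.mem_inter.mp hp
      obtain ⟨hqf, hqP⟩ := Finset.mem_inter.mp hq
      have hpF : p ∈ F := (Finset.mem_filter.mp hpf).1
      have hqF : q ∈ F := (Finset.mem_filter.mp hqf).1
      rw [hP] at hpP hqP
      rcases Finset.mem_insert.mp hpP with rfl | hpP <;>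
        rcases Finset.mem_insert.mp hqP with rfl | hqP
      · rfl
      · rw [Finset.mem_singleton] at hqP
        subst hqP
        exact absurd (hswap c d hcd hpF hqF) not_false
      · rw [Finset.mem_singleton] at hpP
        subst hpP
        exact absurd (hswap c d hcd hqF hpF) not_false
      · rw [Finset.mem_singleton] at hpP hqP
        rw [hpP, hqP]
    have hba : s(b, a) ∈ M.erase s(u, v) := by
      rwa [show s(b, a) = s(a, b) from Sym2.eq_swap]
    have h1 := key {s(u, a), s(v, b)} a b rfl hg
    have h2 := key {s(u, b), s(v, a)} b a rfl hba
    calc (F.filter (fun f => ψ f = s(a, b))).card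
        ≤ (((F.filter (fun f => ψ f = s(a, b))) ∩ {s(u, a), s(v, b)}) ∪
           ((F.filter (fun f => ψ f = s(a, b))) ∩ {s(u, b), s(v, a)})).card := by
          apply Finset.card_le_card
          intro f hf
          rcases Finset.mem_union.mp (hsubP hf) with h | h
          · exact Finset.mem_union_left _ (Finset.mem_inter.mpr ⟨hf, h⟩)
          · exact Finset.mem_union_right _ (Finset.mem_inter.mpr ⟨hf, h⟩)
      _ ≤ _ + _ := Finset.card_union_le _ _
      _ ≤ 2 := by omega
  calc F.card = ∑ g ∈ M.erase s(u, v), (F.filter (fun f => ψ f = g)).card :=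
        Finset.card_eq_sum_card_fiberwise (fun f hf => (hψ f hf).1)
    _ ≤ ∑ _g ∈ M.erase s(u, v), 2 := Finset.sum_le_sum hfiber
    _ = 2 * (M.erase s(u, v)).card := by rw [Finset.sum_const, smul_eq_mul, mul_comm]
    _ = 2 * (m - 1) := by rw [Finset.card_erase_of_mem heM, hMcard]
    _ ≤ 2 * m - 2 := by omega
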